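/- Let X be a finite poset. Then there exist a positive integer n and a surjective weak p-morphism from P(2^n) onto X if and only if X has a free skeleton. -/

import Mathlib

/-- The set of maximal elements of the subposet `S`. -/
def maxSet {X : Type*} [PartialOrder X] (S : Set X) : Set X :=
  {x | x ∈ S ∧ ∀ y ∈ S, x ≤ y → y = x}

/-- A weak p-morphism: an order preserving map such that for all `x` and all maximal `y`
above `p x` there is a maximal element `z` of `↑x` with `p z = y`. -/
def IsWeakPMorphism {X Y : Type*} [PartialOrder X] [PartialOrder Y] (p : X → Y) : Prop :=
  Monotone p ∧
    ∀ x : X, ∀ y ∈ maxSet (Set.univ : Set Y), p x ≤ y →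
      ∃ z ∈ maxSet (Set.Ici x), p z = y

/-- `s` is a witnessing family for a free skeleton on a poset with least element `bot`:
`s x Y` is the element `s_{x,Y}` (its value is only constrained when `Y` is a nonempty
subset of `max ↑x`). -/
def IsFreeSkeleton {X : Type*} [PartialOrder X] (bot : X) (s : X → Set X → X) : Prop :=
  (∀ (x : X) (Y : Set X), Y.Nonempty → Y ⊆ maxSet (Set.Ici x) →
      x ≤ s x Y ∧ Y = maxSet (Set.Ici (s x Y))) ∧
  (∀ (x : X) (Y Z : Set X), Y.Nonempty → Z.Nonempty →
      Y ⊆ maxSet (Set.Ici x) → Z ⊆ maxSet (Set.Ici x) → Y ⊆ Z → s x Z ≤ s x Y) ∧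
  (∀ (x : X) (Y : Set X), Y.Nonempty → Y ⊆ maxSet (Set.univ : Set X) →
      maxSet (Set.Ici x) ⊆ Y → s bot Y ≤ x)

/-- A poset has a free skeleton when it has a least element together with a witnessing
family `s_{x,Y}` as in `IsFreeSkeleton`. -/
def HasFreeSkeleton (X : Type*) [PartialOrder X] : Prop :=
  ∃ (bot : X) (s : X → Set X → X), IsBot bot ∧ IsFreeSkeleton bot s

/-- The poset `P(X)`: pairs `⟨x, C⟩` with `C` a nonempty subset of `↑x`, ordered by
`⟨x, C⟩ ≤ ⟨y, D⟩ iff x ≤ y and D ⊆ C`. -/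
structure PP (X : Type*) [PartialOrder X] where
  pt : X
  cl : Set X
  cl_nonempty : cl.Nonempty
  cl_subset : cl ⊆ Set.Ici pt

instance PP.instPartialOrder {X : Type*} [PartialOrder X] : PartialOrder (PP X) where
  le a b := a.pt ≤ b.pt ∧ b.cl ⊆ a.cl
  le_refl a := ⟨le_rfl, subset_rfl⟩
  le_trans a b c hab hbc := ⟨hab.1.trans hbc.1, hbc.2.trans hab.2⟩
  le_antisymm a b hab hba := by
    obtain ⟨pa, ca, h1, h2⟩ := a
    obtain ⟨pb, cb, h3, h4⟩ := b
    obtain ⟨hle, hsub⟩ := hab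
    obtain ⟨hge, hsup⟩ := hba
    have e1 : pa = pb := le_antisymm hle hge
    have e2 : ca = cb := Set.Subset.antisymm hsup hsub
    subst e1; subst e2; rfl

section Aux

variable {Z : Type*} [PartialOrder Z]

lemma mem_maxSet {S : Set Z} {x : Z} :
    x ∈ maxSet S ↔ x ∈ S ∧ ∀ y ∈ S, x ≤ y → y = x := Iff.rfl

lemma maxSet_Ici_char (x : Z) :
    maxSet (Set.Ici x) = {y | x ≤ y ∧ y ∈ maxSet (Set.univ : Set Z)} := by
  ext y
  constructor
  · rintro ⟨hxy, h⟩
    exact ⟨hxy, ⟨trivial, fun z _ hyz => h z (le_trans hxy hyz) hyz⟩⟩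
  · rintro ⟨hxy, _, h⟩
    exact ⟨hxy, fun z _ hyz => h z trivial hyz⟩

lemma maxSet_mono_univ {x y : Z} (h : y ∈ maxSet (Set.Ici x)) :
    y ∈ maxSet (Set.univ : Set Z) := by
  rw [maxSet_Ici_char] at h; exact h.2

lemma mem_maxSet_Ici {x y : Z} (hxy : x ≤ y) (h : y ∈ maxSet (Set.univ : Set Z)) :
    y ∈ maxSet (Set.Ici x) := by
  rw [maxSet_Ici_char]; exact ⟨hxy, h⟩

lemma maxSet_Ici_nonempty [Finite Z] (x : Z) : (maxSet (Set.Ici x)).Nonempty := by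
  obtain ⟨a, ha, hm⟩ :=
    Set.Finite.exists_maximalFor id (Set.Ici x) (Set.toFinite _) ⟨x, le_rfl⟩
  exact ⟨a, ha, fun y hy hay => le_antisymm (hm hy hay) hay⟩

lemma maxSet_Ici_bot {bot : Z} (h : IsBot bot) :
    maxSet (Set.Ici bot) = maxSet (Set.univ : Set Z) := by
  rw [maxSet_Ici_char]
  ext y; exact ⟨fun hy => hy.2, fun hy => ⟨h y, hy⟩⟩

namespace PP

lemma le_def {a b : PP Z} : a ≤ b ↔ a.pt ≤ b.pt ∧ b.cl ⊆ a.cl := Iff.rfl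

lemma ext' {a b : PP Z} (h1 : a.pt = b.pt) (h2 : a.cl = b.cl) : a = b := by
  cases a; cases b; simp_all

/-- The singleton element `(c, {c})` of `PP Z`. -/
def sing (c : Z) : PP Z := ⟨c, {c}, ⟨c, rfl⟩, Set.singleton_subset_iff.mpr le_rfl⟩

@[simp] lemma sing_pt (c : Z) : (sing c).pt = c := rfl
@[simp] lemma sing_cl (c : Z) : (sing c).cl = {c} := rfl

lemma le_sing {q : PP Z} {c : Z} (h : c ∈ q.cl) : q ≤ sing c :=
  le_def.mpr ⟨q.cl_subset h, Set.singleton_subset_iff.mpr h⟩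

lemma sing_mem_maxSet (c : Z) : sing c ∈ maxSet (Set.univ : Set (PP Z)) := by
  refine ⟨trivial, fun r _ hr => ?_⟩
  obtain ⟨hpt, hcl⟩ := le_def.mp hr
  have hc : c ∈ r.cl := by
    obtain ⟨d, hd⟩ := r.cl_nonempty
    have hdc : d = c := hcl hd
    rwa [hdc] at hd
  have hpt' : r.pt = c := le_antisymm (r.cl_subset hc) hpt
  exact ext' hpt' (Set.Subset.antisymm hcl (Set.singleton_subset_iff.mpr hc))

lemma maxSet_Ici_PP (q : PP Z) : maxSet (Set.Ici q) = sing '' q.cl := by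
  ext r
  constructor
  · rintro ⟨hqr, hmax⟩
    obtain ⟨d, hd⟩ := r.cl_nonempty
    have h1 : r ≤ sing d := le_sing hd
    have h2 : sing d ∈ Set.Ici q := le_trans hqr h1
    exact ⟨d, (le_def.mp hqr).2 hd, hmax _ h2 h1⟩
  · rintro ⟨c, hc, rfl⟩
    exact ⟨le_sing hc, fun r _ hle => (sing_mem_maxSet c).2 r trivial hle⟩

end PP

end Aux
theorem dir1 {X : Type*} [PartialOrder X] [Finite X]
    (n : ℕ) (p : PP (Set (Fin n)) → X)
    (hsurj : Function.Surjective p) (hwp : IsWeakPMorphism p) :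
    HasFreeSkeleton X := by
  classical
  obtain ⟨hmono, hback⟩ := hwp
  have hbotcl : (Set.univ : Set (Set (Fin n))) ⊆ Set.Ici (∅ : Set (Fin n)) :=
    fun u _ => Set.empty_subset u
  set botP : PP (Set (Fin n)) := ⟨∅, Set.univ, Set.univ_nonempty, hbotcl⟩ with hbotP
  have hbotle : ∀ q, botP ≤ q := fun q =>
    PP.le_def.mpr ⟨Set.empty_subset _, Set.subset_univ _⟩
  have hbot : IsBot (p botP) := by
    intro x; obtain ⟨q, rfl⟩ := hsurj x; exact hmono (hbotle q)
  -- p maps singleton elements to maximal elements of X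
  have hsingmax : ∀ c : Set (Fin n), p (PP.sing c) ∈ maxSet (Set.univ : Set X) := by
    intro c
    obtain ⟨y, hy⟩ := maxSet_Ici_nonempty (p (PP.sing c))
    have hle : p (PP.sing c) ≤ y := hy.1
    have hymax := maxSet_mono_univ hy
    obtain ⟨z, hz, hpz⟩ := hback _ y hymax hle
    rw [PP.maxSet_Ici_PP] at hz
    obtain ⟨c', hc', rfl⟩ := hz
    have hcc : c' = c := hc'
    subst hcc; rw [hpz]; exact hymax
  have hIci : ∀ q : PP (Set (Fin n)),
      maxSet (Set.Ici (p q)) = (fun c => p (PP.sing c)) '' q.cl := by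
    intro q
    ext y; constructor
    · intro hy
      rw [maxSet_Ici_char] at hy
      obtain ⟨hle, hymax⟩ := hy
      obtain ⟨z, hz, hpz⟩ := hback q y hymax hle
      rw [PP.maxSet_Ici_PP] at hz
      obtain ⟨c, hc, rfl⟩ := hz
      exact ⟨c, hc, hpz⟩
    · rintro ⟨c, hc, rfl⟩
      exact mem_maxSet_Ici (hmono (PP.le_sing hc)) (hsingmax c)
  -- a choice of preimages, sending the bottom to botP
  have hqx : ∀ x : X, ∃ q : PP (Set (Fin n)), p q = x ∧ (x = p botP → q = botP) := by
    intro x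
    by_cases h : x = p botP
    · exact ⟨botP, h.symm, fun _ => rfl⟩
    · obtain ⟨q, hq⟩ := hsurj x; exact ⟨q, hq, fun hx => absurd hx h⟩
  choose qx hpqx hqbot using hqx
  have hreal : ∀ (x : X) (y : X), y ∈ maxSet (Set.Ici x) →
      ∃ c ∈ (qx x).cl, p (PP.sing c) = y := by
    intro x y hy
    rw [maxSet_Ici_char] at hy
    obtain ⟨hxy, hymax⟩ := hy
    have hle : p (qx x) ≤ y := by rw [hpqx]; exact hxy
    obtain ⟨z, hz, hpz⟩ := hback (qx x) y hymax hle
    rw [PP.maxSet_Ici_PP] at hz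
    obtain ⟨c, hc, rfl⟩ := hz
    exact ⟨c, hc, hpz⟩
  refine ⟨p botP,
    fun x Y =>
      if h : ({c | c ∈ (qx x).cl ∧ p (PP.sing c) ∈ Y}).Nonempty then
        p ⟨(qx x).pt, {c | c ∈ (qx x).cl ∧ p (PP.sing c) ∈ Y}, h,
          fun c hc => (qx x).cl_subset hc.1⟩
      else x,
    hbot, ?_, ?_, ?_⟩
  · -- property (i)
    intro x Y hYne hYsub
    have hne : ({c | c ∈ (qx x).cl ∧ p (PP.sing c) ∈ Y}).Nonempty := by
      obtain ⟨y, hy⟩ := hYne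
      obtain ⟨c, hc, hpc⟩ := hreal x y (hYsub hy)
      exact ⟨c, hc, hpc ▸ hy⟩
    beta_reduce
    rw [dif_pos hne]
    constructor
    · conv_lhs => rw [← hpqx x]
      exact hmono (PP.le_def.mpr ⟨le_refl _, fun c hc => hc.1⟩)
    · rw [hIci]
      ext y; constructor
      · intro hy
        obtain ⟨c, hc, hpc⟩ := hreal x y (hYsub hy)
        exact ⟨c, ⟨hc, hpc ▸ hy⟩, hpc⟩
      · rintro ⟨c, hc, rfl⟩
        exact hc.2
  · -- property (ii)
    intro x Y Z hYne hZne hYsub hZsub hYZ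
    have hneY : ({c | c ∈ (qx x).cl ∧ p (PP.sing c) ∈ Y}).Nonempty := by
      obtain ⟨y, hy⟩ := hYne
      obtain ⟨c, hc, hpc⟩ := hreal x y (hYsub hy)
      exact ⟨c, hc, hpc ▸ hy⟩
    have hneZ : ({c | c ∈ (qx x).cl ∧ p (PP.sing c) ∈ Z}).Nonempty := by
      obtain ⟨y, hy⟩ := hZne
      obtain ⟨c, hc, hpc⟩ := hreal x y (hZsub hy)
      exact ⟨c, hc, hpc ▸ hy⟩
    beta_reduce
    rw [dif_pos hneY, dif_pos hneZ]
    exact hmono (PP.le_def.mpr ⟨le_refl _, fun c hc => ⟨hc.1, hYZ hc.2⟩⟩)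
  · -- property (iii)
    intro x Y hYne hYsub hsub2
    have hqb : qx (p botP) = botP := hqbot (p botP) rfl
    have hne : ({c | c ∈ (qx (p botP)).cl ∧ p (PP.sing c) ∈ Y}).Nonempty := by
      obtain ⟨y, hy⟩ := hYne
      have hy' : y ∈ maxSet (Set.Ici (p botP)) := mem_maxSet_Ici (hbot y) (hYsub hy)
      obtain ⟨c, hc, hpc⟩ := hreal (p botP) y hy'
      exact ⟨c, hc, hpc ▸ hy⟩
    beta_reduce
    rw [dif_pos hne]
    refine le_of_le_of_eq (hmono ?_) (hpqx x)
    refine PP.le_def.mpr ⟨?_, ?_⟩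
    · show (qx (p botP)).pt ≤ (qx x).pt
      rw [hqb]
      exact Set.empty_subset _
    · intro c hc
      refine ⟨show c ∈ (qx (p botP)).cl by rw [hqb]; exact Set.mem_univ c, ?_⟩
      refine hsub2 ?_
      rw [← hpqx x, hIci]
      exact ⟨c, hc, rfl⟩
namespace FSkel

set_option linter.unusedSectionVars false
open scoped Classical

variable {X : Type*} [PartialOrder X] {n : ℕ}

/-- The two-element coordinate set encoding the pair `(x, y)`. -/
def cxy (e : (X ⊕ X × X) ≃ Fin n) (x y : X) : Set (Fin n) :=
  {e (Sum.inl x), e (Sum.inr (x, y))}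

/-- The designated cover of the special element for `x`. -/
def Cx (e : (X ⊕ X × X) ≃ Fin n) (x : X) : Set (Set (Fin n)) :=
  cxy e x '' maxSet (Set.Ici x)

lemma mem_cxy_l (e : (X ⊕ X × X) ≃ Fin n) (x y : X) :
    e (Sum.inl x) ∈ cxy e x y := Set.mem_insert _ _

lemma mem_cxy_r (e : (X ⊕ X × X) ≃ Fin n) (x y : X) :
    e (Sum.inr (x, y)) ∈ cxy e x y :=
  Set.mem_insert_iff.mpr (Or.inr rfl)

lemma cxy_inj {e : (X ⊕ X × X) ≃ Fin n} {x y x' y' : X}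
    (h : cxy e x y = cxy e x' y') : x = x' ∧ y = y' := by
  have h1 : e (Sum.inl x) ∈ cxy e x' y' := h ▸ mem_cxy_l e x y
  have hx : x = x' := by
    simp only [cxy, Set.mem_insert_iff, Set.mem_singleton_iff,
      Equiv.apply_eq_iff_eq] at h1
    rcases h1 with h1 | h1
    · exact Sum.inl.inj h1
    · exact absurd h1 (by simp)
  subst hx
  have h2 : e (Sum.inr (x, y)) ∈ cxy e x y' := h ▸ mem_cxy_r e x y
  simp only [cxy, Set.mem_insert_iff, Set.mem_singleton_iff,
    Equiv.apply_eq_iff_eq] at h2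
  rcases h2 with h2 | h2
  · exact absurd h2 (by simp)
  · obtain ⟨-, hy⟩ := Prod.mk.injEq .. ▸ Sum.inr.inj h2
    exact ⟨rfl, by simpa using (Sum.inr.inj h2)⟩

/-- The special element `q_x = (u_x, C_x)`. -/
def qsp [Finite X] (e : (X ⊕ X × X) ≃ Fin n) (x : X) : PP (Set (Fin n)) where
  pt := {e (Sum.inl x)}
  cl := Cx e x
  cl_nonempty := (maxSet_Ici_nonempty x).image _
  cl_subset := by
    rintro c ⟨y, hy, rfl⟩
    exact Set.singleton_subset_iff.mpr (mem_cxy_l e x y)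

@[simp] lemma qsp_pt [Finite X] (e : (X ⊕ X × X) ≃ Fin n) (x : X) :
    (qsp e x).pt = {e (Sum.inl x)} := rfl

@[simp] lemma qsp_cl [Finite X] (e : (X ⊕ X × X) ≃ Fin n) (x : X) :
    (qsp e x).cl = Cx e x := rfl

lemma Cx_disj {e : (X ⊕ X × X) ≃ Fin n} {x x' : X} {c : Set (Fin n)}
    (h : c ∈ Cx e x) (h' : c ∈ Cx e x') : x = x' := by
  obtain ⟨y, -, rfl⟩ := h
  obtain ⟨y', -, hc⟩ := h'
  exact ((cxy_inj hc).1).symm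

lemma qsp_inj [Finite X] {e : (X ⊕ X × X) ≃ Fin n} {x x' : X}
    (h : qsp e x = qsp e x') : x = x' := by
  have h1 : ({e (Sum.inl x)} : Set (Fin n)) = {e (Sum.inl x')} := congrArg PP.pt h
  have h2 := Set.singleton_eq_singleton_iff.mp h1
  simpa using e.injective h2

lemma sing_ne_qsp [Finite X] {e : (X ⊕ X × X) ≃ Fin n} (c : Set (Fin n)) (x : X) :
    PP.sing c ≠ qsp e x := by
  intro h
  have hcl : ({c} : Set (Set (Fin n))) = Cx e x := congrArg PP.cl h
  have hpt : c = {e (Sum.inl x)} := congrArg PP.pt h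
  have hmem : c ∈ Cx e x := by rw [← hcl]; exact rfl
  obtain ⟨y, -, hc⟩ := hmem
  have : e (Sum.inr (x, y)) ∈ ({e (Sum.inl x)} : Set (Fin n)) := by
    rw [← hpt, ← hc]; exact mem_cxy_r e x y
  simpa using e.injective (Set.mem_singleton_iff.mp this)

/-- The labelling of points of the Boolean lattice by maximal elements of `X`. -/
noncomputable def mm [Finite X] (e : (X ⊕ X × X) ≃ Fin n) (bot : X)
    (c : Set (Fin n)) : X :=
  if h : ∃ z : X × X, z.2 ∈ maxSet (Set.Ici z.1) ∧ c = cxy e z.1 z.2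
  then (Classical.choose h).2
  else Classical.choose (maxSet_Ici_nonempty bot)

lemma mm_spec [Finite X] {e : (X ⊕ X × X) ≃ Fin n} (bot : X) {x y : X}
    (hy : y ∈ maxSet (Set.Ici x)) : mm e bot (cxy e x y) = y := by
  have h : ∃ z : X × X, z.2 ∈ maxSet (Set.Ici z.1) ∧ cxy e x y = cxy e z.1 z.2 :=
    ⟨(x, y), hy, rfl⟩
  rw [mm, dif_pos h]
  obtain ⟨-, hc⟩ := Classical.choose_spec h
  exact ((cxy_inj hc).2).symm

lemma mm_max [Finite X] (e : (X ⊕ X × X) ≃ Fin n) (bot : X) (c : Set (Fin n)) :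
    mm e bot c ∈ maxSet (Set.univ : Set X) := by
  rw [mm]
  split_ifs with h
  · exact maxSet_mono_univ (Classical.choose_spec h).1
  · exact maxSet_mono_univ (Classical.choose_spec (maxSet_Ici_nonempty bot))

/-- The localization of an element of `P(2^n)`: the unique `x` whose special element
lies below it, if any, and `bot` otherwise. -/
noncomputable def floc [Finite X] (e : (X ⊕ X × X) ≃ Fin n) (bot : X)
    (q : PP (Set (Fin n))) : X :=
  if h : ∃ x : X, qsp e x ≤ q then Classical.choose h else bot

lemma floc_spec [Finite X] {e : (X ⊕ X × X) ≃ Fin n} (bot : X) {x : X}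
    {q : PP (Set (Fin n))} (h : qsp e x ≤ q) : floc e bot q = x := by
  rw [floc, dif_pos ⟨x, h⟩]
  have h' := Classical.choose_spec (⟨x, h⟩ : ∃ x : X, qsp e x ≤ q)
  obtain ⟨d, hd⟩ := q.cl_nonempty
  exact Cx_disj ((PP.le_def.mp h').2 hd) ((PP.le_def.mp h).2 hd)

lemma floc_bot [Finite X] {e : (X ⊕ X × X) ≃ Fin n} (bot : X)
    {q : PP (Set (Fin n))} (h : ¬ ∃ x : X, qsp e x ≤ q) : floc e bot q = bot :=
  dif_neg h

/-- The weak p-morphism from `P(2^n)` onto `X`. -/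
noncomputable def pfun [Finite X] (e : (X ⊕ X × X) ≃ Fin n) (bot : X)
    (s : X → Set X → X) (q : PP (Set (Fin n))) : X :=
  if h : ∃ x : X, q = qsp e x then Classical.choose h
  else if h2 : ∃ c : Set (Fin n), q = PP.sing c then mm e bot (Classical.choose h2)
  else s (floc e bot q) (mm e bot '' q.cl)

lemma pfun_qsp [Finite X] {e : (X ⊕ X × X) ≃ Fin n} (bot : X)
    (s : X → Set X → X) (x : X) : pfun e bot s (qsp e x) = x := by
  rw [pfun, dif_pos ⟨x, rfl⟩]
  exact (qsp_inj (Classical.choose_spec (⟨x, rfl⟩ : ∃ y : X, qsp e x = qsp e y))).symm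

lemma pfun_sing [Finite X] {e : (X ⊕ X × X) ≃ Fin n} (bot : X)
    (s : X → Set X → X) (c : Set (Fin n)) : pfun e bot s (PP.sing c) = mm e bot c := by
  have hneg : ¬ ∃ x : X, PP.sing c = qsp e x := by
    rintro ⟨x, hx⟩; exact sing_ne_qsp c x hx
  rw [pfun, dif_neg hneg, dif_pos ⟨c, rfl⟩]
  have hspec := Classical.choose_spec (⟨c, rfl⟩ : ∃ d : Set (Fin n), PP.sing c = PP.sing d)
  have h2 : c = Classical.choose (⟨c, rfl⟩ : ∃ d : Set (Fin n), PP.sing c = PP.sing d) := by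
    simpa using congrArg PP.pt hspec
  rw [← h2]

lemma pfun_gen [Finite X] {e : (X ⊕ X × X) ≃ Fin n} (bot : X)
    (s : X → Set X → X) {q : PP (Set (Fin n))}
    (h1 : ¬ ∃ x : X, q = qsp e x) (h2 : ¬ ∃ c : Set (Fin n), q = PP.sing c) :
    pfun e bot s q = s (floc e bot q) (mm e bot '' q.cl) := by
  rw [pfun, dif_neg h1, dif_neg h2]

lemma mm_image_subset [Finite X] {e : (X ⊕ X × X) ≃ Fin n} (bot : X) {x : X}
    {q : PP (Set (Fin n))} (h : qsp e x ≤ q) :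
    mm e bot '' q.cl ⊆ maxSet (Set.Ici x) := by
  rintro - ⟨c, hc, rfl⟩
  have hmem : c ∈ Cx e x := (PP.le_def.mp h).2 hc
  obtain ⟨y, hy, rfl⟩ := hmem
  rw [mm_spec bot hy]
  exact hy

lemma mm_image_subset_max [Finite X] {e : (X ⊕ X × X) ≃ Fin n} (bot : X)
    (q : PP (Set (Fin n))) : mm e bot '' q.cl ⊆ maxSet (Set.univ : Set X) := by
  rintro - ⟨c, hc, rfl⟩; exact mm_max e bot c

lemma mm_image_floc [Finite X] {e : (X ⊕ X × X) ≃ Fin n} {bot : X}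
    (hbot : IsBot bot) (q : PP (Set (Fin n))) :
    mm e bot '' q.cl ⊆ maxSet (Set.Ici (floc e bot q)) := by
  by_cases h : ∃ x : X, qsp e x ≤ q
  · obtain ⟨x, hx⟩ := h
    rw [floc_spec bot hx]
    exact mm_image_subset bot hx
  · rw [floc_bot bot h, maxSet_Ici_bot hbot]
    exact mm_image_subset_max bot q

end FSkel
theorem dir2 {X : Type*} [PartialOrder X] [Finite X] (h : HasFreeSkeleton X) :
    ∃ n : ℕ, 0 < n ∧ ∃ p : PP (Set (Fin n)) → X,
      Function.Surjective p ∧ IsWeakPMorphism p := by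
  classical
  obtain ⟨bot, s, hbot, hsk1, hsk2, hsk3⟩ := h
  haveI : Fintype X := Fintype.ofFinite X
  haveI : Nonempty X := ⟨bot⟩
  refine ⟨Fintype.card (X ⊕ X × X), Fintype.card_pos, ?_⟩
  set e : (X ⊕ X × X) ≃ Fin (Fintype.card (X ⊕ X × X)) := Fintype.equivFin _ with he
  refine ⟨FSkel.pfun e bot s, fun x => ⟨FSkel.qsp e x, FSkel.pfun_qsp bot s x⟩, ?_, ?_⟩
  · -- Monotone
    intro q q' hle
    by_cases hq1 : ∃ x : X, q = FSkel.qsp e x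
    · obtain ⟨x, rfl⟩ := hq1
      by_cases hq'1 : ∃ z : X, q' = FSkel.qsp e z
      · obtain ⟨z, rfl⟩ := hq'1
        have hpt := (PP.le_def.mp hle).1
        have hmem : e (Sum.inl x) ∈ ({e (Sum.inl z)} : Set (Fin _)) := hpt rfl
        have hxz : x = z := by simpa using e.injective (Set.mem_singleton_iff.mp hmem)
        subst hxz
        exact le_rfl
      · by_cases hq'2 : ∃ c : Set (Fin _), q' = PP.sing c
        · obtain ⟨c, rfl⟩ := hq'2
          have hc : c ∈ FSkel.Cx e x := (PP.le_def.mp hle).2 rfl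
          obtain ⟨y, hy, rfl⟩ := hc
          rw [FSkel.pfun_qsp bot s x, FSkel.pfun_sing bot s, FSkel.mm_spec bot hy]
          exact hy.1
        · rw [FSkel.pfun_qsp bot s x, FSkel.pfun_gen bot s hq'1 hq'2,
            FSkel.floc_spec bot hle]
          exact (hsk1 x _ (q'.cl_nonempty.image _) (FSkel.mm_image_subset bot hle)).1
    · by_cases hq2 : ∃ c : Set (Fin _), q = PP.sing c
      · obtain ⟨c, rfl⟩ := hq2
        have hq' : q' = PP.sing c := (PP.sing_mem_maxSet c).2 q' trivial hle
        rw [hq']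
      · rw [FSkel.pfun_gen bot s hq1 hq2]
        by_cases hq'1 : ∃ z : X, q' = FSkel.qsp e z
        · obtain ⟨z, rfl⟩ := hq'1
          have hnx : ¬ ∃ x : X, FSkel.qsp e x ≤ q := by
            rintro ⟨x, hx⟩
            have hpt := (PP.le_def.mp (hx.trans hle)).1
            have hmem : e (Sum.inl x) ∈ ({e (Sum.inl z)} : Set (Fin _)) := hpt rfl
            have hxz : x = z := by simpa using e.injective (Set.mem_singleton_iff.mp hmem)
            subst hxz
            exact hq1 ⟨x, le_antisymm hle hx⟩
          rw [FSkel.floc_bot bot hnx, FSkel.pfun_qsp bot s z]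
          refine hsk3 z _ (q.cl_nonempty.image _) (FSkel.mm_image_subset_max bot q) ?_
          intro y' hy'
          exact ⟨FSkel.cxy e z y', (PP.le_def.mp hle).2 ⟨y', hy', rfl⟩,
            FSkel.mm_spec bot hy'⟩
        · by_cases hq'2 : ∃ c : Set (Fin _), q' = PP.sing c
          · obtain ⟨c, rfl⟩ := hq'2
            rw [FSkel.pfun_sing bot s]
            have hc : c ∈ q.cl := (PP.le_def.mp hle).2 rfl
            obtain ⟨hle1, heq⟩ := hsk1 (FSkel.floc e bot q) _
              (q.cl_nonempty.image _) (FSkel.mm_image_floc hbot q)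
            have hmm : FSkel.mm e bot c ∈
                maxSet (Set.Ici (s (FSkel.floc e bot q) (FSkel.mm e bot '' q.cl))) := by
              rw [← heq]; exact ⟨c, hc, rfl⟩
            exact hmm.1
          · rw [FSkel.pfun_gen bot s hq'1 hq'2]
            by_cases hx : ∃ x : X, FSkel.qsp e x ≤ q
            · obtain ⟨x, hqx⟩ := hx
              rw [FSkel.floc_spec bot hqx, FSkel.floc_spec bot (hqx.trans hle)]
              exact hsk2 x _ _ (q'.cl_nonempty.image _) (q.cl_nonempty.image _)
                (FSkel.mm_image_subset bot (hqx.trans hle)) (FSkel.mm_image_subset bot hqx)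
                (Set.image_mono (PP.le_def.mp hle).2)
            · rw [FSkel.floc_bot bot hx]
              by_cases hx' : ∃ x : X, FSkel.qsp e x ≤ q'
              · obtain ⟨x, hqx'⟩ := hx'
                rw [FSkel.floc_spec bot hqx']
                obtain ⟨-, heq⟩ := hsk1 x _ (q'.cl_nonempty.image _)
                  (FSkel.mm_image_subset bot hqx')
                refine hsk3 _ _ (q.cl_nonempty.image _)
                  (FSkel.mm_image_subset_max bot q) ?_
                rw [← heq]
                exact Set.image_mono (PP.le_def.mp hle).2
              · rw [FSkel.floc_bot bot hx']
                refine hsk2 bot _ _ (q'.cl_nonempty.image _) (q.cl_nonempty.image _)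
                  ?_ ?_ (Set.image_mono (PP.le_def.mp hle).2)
                · rw [maxSet_Ici_bot hbot]; exact FSkel.mm_image_subset_max bot q'
                · rw [maxSet_Ici_bot hbot]; exact FSkel.mm_image_subset_max bot q
  · -- back condition
    intro q y hy hpy
    by_cases hq1 : ∃ x : X, q = FSkel.qsp e x
    · obtain ⟨x, rfl⟩ := hq1
      rw [FSkel.pfun_qsp bot s x] at hpy
      have hyx : y ∈ maxSet (Set.Ici x) := mem_maxSet_Ici hpy hy
      refine ⟨PP.sing (FSkel.cxy e x y), ?_, ?_⟩
      · rw [PP.maxSet_Ici_PP]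
        exact ⟨FSkel.cxy e x y, ⟨y, hyx, rfl⟩, rfl⟩
      · rw [FSkel.pfun_sing bot s, FSkel.mm_spec bot hyx]
    · by_cases hq2 : ∃ c : Set (Fin _), q = PP.sing c
      · obtain ⟨c, rfl⟩ := hq2
        rw [FSkel.pfun_sing bot s] at hpy
        have hymm : y = FSkel.mm e bot c := (FSkel.mm_max e bot c).2 y trivial hpy
        refine ⟨PP.sing c, ?_, ?_⟩
        · rw [PP.maxSet_Ici_PP]; exact ⟨c, rfl, rfl⟩
        · rw [FSkel.pfun_sing bot s]; exact hymm.symm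
      · rw [FSkel.pfun_gen bot s hq1 hq2] at hpy
        obtain ⟨-, heq⟩ := hsk1 (FSkel.floc e bot q) _
          (q.cl_nonempty.image _) (FSkel.mm_image_floc hbot q)
        have hmem : y ∈ FSkel.mm e bot '' q.cl := by
          rw [heq]; exact mem_maxSet_Ici hpy hy
        obtain ⟨c, hc, hmc⟩ := hmem
        refine ⟨PP.sing c, ?_, ?_⟩
        · rw [PP.maxSet_Ici_PP]; exact ⟨c, hc, rfl⟩
        · rw [FSkel.pfun_sing bot s]; exact hmc

/-- A finite poset `X` is a surjective weak p-morphic image of `P(2^n)` for some positive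
integer `n` if and only if `X` has a free skeleton. -/
theorem weakPMorphic_image_of_pp_iff_hasFreeSkeleton
    {X : Type*} [PartialOrder X] [Finite X] :
    (∃ n : ℕ, 0 < n ∧ ∃ p : PP (Set (Fin n)) → X,
        Function.Surjective p ∧ IsWeakPMorphism p) ↔
      HasFreeSkeleton X := by
  constructor
  · rintro ⟨n, -, p, hsurj, hwp⟩
    exact dir1 n p hsurj hwp
  · exact dir2
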